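/- For the Baumslag module A₁ = ℤ[x, x^{-1}, (1+x)^{-1}] over the group ring ℤQ₁ where Q₁ = ⟨q_0⟩ × ⟨q_1⟩ ≅ ℤ² acts by q_0 · a = xa and q_1 · a = (1+x)a, the annihilator of A₁ in ℤQ₁ is the principal ideal generated by q_0 + 1 - q_1. -/

import Mathlib

open scoped Classical

/-- The image of an integer polynomial in the field of rational functions `ℚ(x)`. -/
noncomputable def toRF (g : Polynomial ℤ) : RatFunc ℚ :=
  algebraMap (Polynomial ℚ) (RatFunc ℚ) (g.map (Int.castRingHom ℚ))

noncomputable def toRFHom : Polynomial ℤ →+* RatFunc ℚ :=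
  (algebraMap (Polynomial ℚ) (RatFunc ℚ)).comp (Polynomial.mapRingHom (Int.castRingHom ℚ))

lemma toRFHom_apply (g : Polynomial ℤ) : toRFHom g = toRF g := rfl

lemma toRFHom_injective : Function.Injective toRFHom :=
  (IsFractionRing.injective (Polynomial ℚ) (RatFunc ℚ)).comp
    (Polynomial.map_injective _ Int.cast_injective)

/-- abbreviation for the Laurent ring -/
abbrev Mz : Type := MonoidAlgebra ℤ (Multiplicative (ℤ × ℤ))

noncomputable def qq (p : ℤ × ℤ) : Mz :=
  MonoidAlgebra.of ℤ (Multiplicative (ℤ × ℤ)) (Multiplicative.ofAdd p)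

lemma qq_mul (a b : ℤ × ℤ) : qq a * qq b = qq (a + b) := by
  simp [qq, ← map_mul, ← ofAdd_add]

lemma qq_zero : qq 0 = 1 := by
  show MonoidAlgebra.of ℤ (Multiplicative (ℤ × ℤ)) (Multiplicative.ofAdd 0) = 1
  rw [ofAdd_zero, map_one]

lemma qq_pow (a b : ℤ) (n : ℕ) : qq (a, b) ^ n = qq (n * a, n * b) := by
  induction n with
  | zero => simpa using (show qq (0, 0) = 1 from qq_zero).symm
  | succ n ih =>
    rw [pow_succ, ih, qq_mul, Prod.mk_add_mk]
    congr 1 <;> push_cast <;> ring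

/-- polynomial model map `ℤ[X][Y] → Mz`, `X ↦ qq (1,0)`, `Y ↦ qq (0,1)`. -/
noncomputable def θ : Polynomial (Polynomial ℤ) →+* Mz :=
  Polynomial.eval₂RingHom
    (Polynomial.eval₂RingHom (Int.castRingHom Mz) (qq (1, 0))) (qq (0, 1))

lemma θ_CC (c : ℤ) : θ (Polynomial.C (Polynomial.C c)) = (c : Mz) := by
  simp [θ]

lemma θ_CX : θ (Polynomial.C Polynomial.X) = qq (1, 0) := by
  simp [θ]

lemma θ_X : θ Polynomial.X = qq (0, 1) := by
  simp [θ]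

lemma θ_mono (m n : ℕ) :
    θ (Polynomial.C (Polynomial.X ^ m) * Polynomial.X ^ n) = qq ((m : ℤ), (n : ℤ)) := by
  rw [map_mul, Polynomial.C_pow, map_pow θ, map_pow θ, θ_X, θ_CX, qq_pow, qq_pow,
    qq_mul, Prod.mk_add_mk]
  norm_num

lemma exists_rep (z : Mz) :
    ∃ (N : ℕ) (P : Polynomial (Polynomial ℤ)), qq ((N : ℤ), (N : ℤ)) * z = θ P := by
  induction z using MonoidAlgebra.induction_on with
  | of g =>
    set a := (Multiplicative.toAdd g).1 with ha
    set b := (Multiplicative.toAdd g).2 with hb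
    refine ⟨a.natAbs + b.natAbs,
      Polynomial.C (Polynomial.X ^ (((a.natAbs + b.natAbs : ℕ) : ℤ) + a).toNat) *
        Polynomial.X ^ (((a.natAbs + b.natAbs : ℕ) : ℤ) + b).toNat, ?_⟩
    rw [θ_mono, Int.toNat_of_nonneg (by omega), Int.toNat_of_nonneg (by omega)]
    have hg : MonoidAlgebra.of ℤ (Multiplicative (ℤ × ℤ)) g = qq (a, b) := rfl
    rw [hg, qq_mul, Prod.mk_add_mk]
  | add f g hf hg =>
    obtain ⟨N₁, P₁, h₁⟩ := hf
    obtain ⟨N₂, P₂, h₂⟩ := hg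
    refine ⟨N₁ + N₂,
      Polynomial.C (Polynomial.X ^ N₂) * Polynomial.X ^ N₂ * P₁ +
      Polynomial.C (Polynomial.X ^ N₁) * Polynomial.X ^ N₁ * P₂, ?_⟩
    rw [map_add, map_mul θ, θ_mono, map_mul θ, θ_mono, ← h₁, ← h₂]
    have e : qq (((N₁ + N₂ : ℕ) : ℤ), ((N₁ + N₂ : ℕ) : ℤ))
        = qq ((N₂ : ℤ), (N₂ : ℤ)) * qq ((N₁ : ℤ), (N₁ : ℤ)) := by
      rw [qq_mul, Prod.mk_add_mk]
      congr 1 <;> push_cast <;> ring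
    rw [e]
    ring
  | smul r f hf =>
    obtain ⟨N, P, h⟩ := hf
    refine ⟨N, Polynomial.C (Polynomial.C r) * P, ?_⟩
    rw [map_mul, θ_CC, ← h, zsmul_eq_mul]
    ring

lemma poly_ker (P : Polynomial (Polynomial ℤ))
    (hP : Polynomial.eval₂ toRFHom (toRF (Polynomial.X + 1)) P = 0) :
    Polynomial.C Polynomial.X + 1 - Polynomial.X ∣ P := by
  have h2 : P.eval (Polynomial.X + 1) = 0 := by
    apply toRFHom_injective
    rw [map_zero, Polynomial.eval, Polynomial.hom_eval₂]
    rw [show toRFHom.comp (RingHom.id (Polynomial ℤ)) = toRFHom from rfl]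
    exact hP
  have h1 : Polynomial.X - Polynomial.C (Polynomial.X + 1) ∣
      P - Polynomial.C (P.eval (Polynomial.X + 1)) :=
    Polynomial.X_sub_C_dvd_sub_C_eval
  rw [h2, map_zero, sub_zero] at h1
  have hneg : (Polynomial.C Polynomial.X + 1 - Polynomial.X : Polynomial (Polynomial ℤ)) =
      -(Polynomial.X - Polynomial.C (Polynomial.X + 1)) := by
    rw [map_add, map_one]; ring
  rw [hneg]
  exact (neg_dvd).mpr h1

theorem stmt17
    (φ : MonoidAlgebra ℤ (Multiplicative (ℤ × ℤ)) →+* RatFunc ℚ)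
    (hφ : ∀ a b : ℤ,
      φ (MonoidAlgebra.of ℤ (Multiplicative (ℤ × ℤ)) (Multiplicative.ofAdd (a, b))) =
        toRF Polynomial.X ^ a * toRF (Polynomial.X + 1) ^ b) :
    RingHom.ker φ = Ideal.span
      {MonoidAlgebra.of ℤ (Multiplicative (ℤ × ℤ)) (Multiplicative.ofAdd ((1 : ℤ), (0 : ℤ)))
        + 1 -
       MonoidAlgebra.of ℤ (Multiplicative (ℤ × ℤ)) (Multiplicative.ofAdd ((0 : ℤ), (1 : ℤ)))} := by
  have hq10 : φ (qq (1, 0)) = toRF Polynomial.X := by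
    have := hφ 1 0; simpa [qq] using this
  have hq01 : φ (qq (0, 1)) = toRF (Polynomial.X + 1) := by
    have := hφ 0 1; simpa [qq] using this
  have hRF : toRF (Polynomial.X + 1) = toRF Polynomial.X + 1 := by
    rw [← toRFHom_apply, ← toRFHom_apply, map_add, map_one]
  have hgen : φ (qq (1, 0) + 1 - qq (0, 1)) = 0 := by
    rw [map_sub, map_add, map_one, hq10, hq01, hRF]; ring
  -- composite φ ∘ θ is evaluation
  have hcomp : ∀ P : Polynomial (Polynomial ℤ),
      φ (θ P) = Polynomial.eval₂ toRFHom (toRF (Polynomial.X + 1)) P := by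
    intro P
    rw [θ, Polynomial.coe_eval₂RingHom, Polynomial.hom_eval₂, hq01]
    congr 1
    apply Polynomial.ringHom_ext
    · intro n
      rw [RingHom.comp_apply, Polynomial.coe_eval₂RingHom, Polynomial.eval₂_C]
      simp [Polynomial.C_eq_intCast]
    · rw [RingHom.comp_apply, Polynomial.coe_eval₂RingHom, Polynomial.eval₂_X, hq10,
        ← toRFHom_apply]
  apply le_antisymm
  · intro z hz
    rw [RingHom.mem_ker] at hz
    obtain ⟨N, P, hNP⟩ := exists_rep z
    have hφθ : Polynomial.eval₂ toRFHom (toRF (Polynomial.X + 1)) P = 0 := by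
      rw [← hcomp, ← hNP, map_mul, hz, mul_zero]
    obtain ⟨m, hm⟩ := poly_ker P hφθ
    have hθP : θ P = (qq (1, 0) + 1 - qq (0, 1)) * θ m := by
      rw [hm, map_mul, map_sub, map_add, map_one, θ_CX, θ_X]
    have hz' : z = qq (-(N : ℤ), -(N : ℤ)) * ((qq (1, 0) + 1 - qq (0, 1)) * θ m) := by
      rw [← hθP, ← hNP, ← mul_assoc, qq_mul, Prod.mk_add_mk]
      norm_num [show qq (0, 0) = 1 from qq_zero]
    rw [hz']
    exact Ideal.mul_mem_left _ _ (Ideal.mul_mem_right _ _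
      (Ideal.subset_span (Set.mem_singleton _)))
  · rw [Ideal.span_le, Set.singleton_subset_iff]
    exact hgen
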